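/- For a bounded operator a on ℓ²(X), the following are equivalent: (1) a·k ∈ K(𝒳) and k·a ∈ K(𝒳) for every k ∈ K(𝒳) (i.e. a is a multiplier of K(𝒳) inside B(ℓ²(X))); (2) the commutator a∘M_f − M_f∘a belongs to K(𝒳) for every f ∈ c0(𝒳). -/

import Mathlib

open scoped ENNReal

/-- A subset `A ⊆ X` is *small relative to `𝒳`* if it is contained in some member of `𝒳`. -/
def SmallRel {X : Type*} (𝒳 : Set (Set X)) (A : Set X) : Prop :=
  ∃ E ∈ 𝒳, A ⊆ E

/-- `c0alg 𝒳` inside `ℓ∞(X)`. -/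
def c0alg {X : Type*} (𝒳 : Set (Set X)) : Set (lp (fun _ : X => ℂ) ∞) :=
  {f | SmallRel 𝒳 {x | f x ≠ 0}}

/-- `c0 𝒳` is the norm closure of `c0alg 𝒳` in `ℓ∞(X)`. -/
def c0Rel {X : Type*} (𝒳 : Set (Set X)) : Set (lp (fun _ : X => ℂ) ∞) :=
  closure (c0alg 𝒳)

/-- `T` is the multiplication operator on `ℓ²(X)` by the bounded function `f`. -/
def IsMulOp {X : Type*} (f : lp (fun _ : X => ℂ) ∞)
    (T : lp (fun _ : X => ℂ) 2 →L[ℂ] lp (fun _ : X => ℂ) 2) : Prop :=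
  ∀ (ξ : lp (fun _ : X => ℂ) 2) (x : X), T ξ x = f x * ξ x

/-- `K(𝒳)`: the norm closure of the set of finite sums of operators `M_f ∘ A ∘ M_g`
with `f, g ∈ c0(𝒳)` and `A` a bounded operator on `ℓ²(X)`. -/
def KRel {X : Type*} (𝒳 : Set (Set X)) :
    Set (lp (fun _ : X => ℂ) 2 →L[ℂ] lp (fun _ : X => ℂ) 2) :=
  closure (AddSubmonoid.closure
    {T | ∃ f ∈ c0Rel 𝒳, ∃ g ∈ c0Rel 𝒳,
      ∃ F G A : lp (fun _ : X => ℂ) 2 →L[ℂ] lp (fun _ : X => ℂ) 2,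
        IsMulOp f F ∧ IsMulOp g G ∧ T = F.comp (A.comp G)} :
    Set (lp (fun _ : X => ℂ) 2 →L[ℂ] lp (fun _ : X => ℂ) 2))

namespace KRelAux

open ContinuousLinearMap

variable {X : Type*}

lemma memℓp_mul (f : lp (fun _ : X => ℂ) ∞) (ξ : lp (fun _ : X => ℂ) 2) :
    Memℓp (fun x => f x * ξ x) 2 := by
  apply memℓp_gen
  have h2 : ((2 : ℝ≥0∞)).toReal = 2 := by norm_num
  rw [h2]
  have hs : Summable fun x => ‖f‖ ^ (2:ℝ) * ‖ξ x‖ ^ (2:ℝ) := by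
    apply Summable.mul_left
    simpa [h2] using (lp.memℓp ξ).summable (by norm_num [h2])
  refine hs.of_nonneg_of_le (fun x => by positivity) fun x => ?_
  rw [norm_mul, Real.mul_rpow (norm_nonneg _) (norm_nonneg _)]
  gcongr
  exact lp.norm_apply_le_norm ENNReal.top_ne_zero f x

lemma norm_le_of_eq_mul (f : lp (fun _ : X => ℂ) ∞) (ξ g : lp (fun _ : X => ℂ) 2)
    (hg : ∀ x, g x = f x * ξ x) : ‖g‖ ≤ ‖f‖ * ‖ξ‖ := by
  have h2 : (0:ℝ) < ((2 : ℝ≥0∞)).toReal := by norm_num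
  refine lp.norm_le_of_tsum_le h2 (by positivity) ?_
  have hξ : ∑' x, ‖ξ x‖ ^ ((2:ℝ≥0∞)).toReal = ‖ξ‖ ^ ((2:ℝ≥0∞)).toReal :=
    (lp.norm_rpow_eq_tsum h2 ξ).symm
  have hb : ∑' x, ‖g x‖ ^ ((2:ℝ≥0∞)).toReal
      ≤ ∑' x, ‖f‖ ^ ((2:ℝ≥0∞)).toReal * ‖ξ x‖ ^ ((2:ℝ≥0∞)).toReal := by
    refine Summable.tsum_le_tsum (fun x => ?_) ((lp.memℓp g).summable h2)
      (Summable.mul_left _ ((lp.memℓp ξ).summable h2))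
    rw [hg x, norm_mul, Real.mul_rpow (norm_nonneg _) (norm_nonneg _)]
    gcongr
    exact lp.norm_apply_le_norm ENNReal.top_ne_zero f x
  calc ∑' x, ‖g x‖ ^ ((2:ℝ≥0∞)).toReal
      ≤ ‖f‖ ^ ((2:ℝ≥0∞)).toReal * ∑' x, ‖ξ x‖ ^ ((2:ℝ≥0∞)).toReal := by
        rwa [tsum_mul_left] at hb
    _ = (‖f‖ * ‖ξ‖) ^ ((2:ℝ≥0∞)).toReal := by
        rw [hξ, ← Real.mul_rpow (norm_nonneg _) (norm_nonneg _)]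

noncomputable def mulOp (f : lp (fun _ : X => ℂ) ∞) :
    lp (fun _ : X => ℂ) 2 →L[ℂ] lp (fun _ : X => ℂ) 2 :=
  LinearMap.mkContinuous
    { toFun := fun ξ => ⟨fun x => f x * ξ x, memℓp_mul f ξ⟩
      map_add' := fun ξ η => by
        ext x
        simp [lp.coeFn_add, mul_add]
        rfl
      map_smul' := fun c ξ => by
        ext x
        simp [lp.coeFn_smul, Pi.smul_apply, smul_eq_mul]
        ring }
    ‖f‖ (fun ξ => norm_le_of_eq_mul f ξ _ (fun _ => rfl))

lemma isMulOp_mulOp (f : lp (fun _ : X => ℂ) ∞) : IsMulOp f (mulOp f) :=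
  fun _ _ => rfl

lemma isMulOp_norm_le {f : lp (fun _ : X => ℂ) ∞}
    {F : lp (fun _ : X => ℂ) 2 →L[ℂ] lp (fun _ : X => ℂ) 2}
    (hF : IsMulOp f F) : ‖F‖ ≤ ‖f‖ :=
  F.opNorm_le_bound (norm_nonneg f) fun ξ => norm_le_of_eq_mul f ξ (F ξ) (hF ξ)

lemma isMulOp_sub {f g : lp (fun _ : X => ℂ) ∞}
    {F G : lp (fun _ : X => ℂ) 2 →L[ℂ] lp (fun _ : X => ℂ) 2}
    (hF : IsMulOp f F) (hG : IsMulOp g G) : IsMulOp (f - g) (F - G) := by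
  intro ξ x
  have h1 : (F - G) ξ = F ξ - G ξ := rfl
  rw [h1, lp.coeFn_sub, Pi.sub_apply, lp.coeFn_sub, Pi.sub_apply, hF ξ x, hG ξ x, sub_mul]

noncomputable def ind (E : Set X) : lp (fun _ : X => ℂ) ∞ :=
  ⟨E.indicator (fun _ => (1:ℂ)), by
    apply memℓp_infty
    refine ⟨1, ?_⟩
    rintro r ⟨x, rfl⟩
    by_cases h : x ∈ E <;>
      simp [Set.indicator_of_mem, Set.indicator_of_notMem, h]⟩

lemma ind_apply (E : Set X) (x : X) : ind E x = E.indicator (fun _ => (1:ℂ)) x := rfl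

/-- generator set of `KRel`. -/
def genSet (𝒳 : Set (Set X)) :
    Set (lp (fun _ : X => ℂ) 2 →L[ℂ] lp (fun _ : X => ℂ) 2) :=
  {T | ∃ f ∈ c0Rel 𝒳, ∃ g ∈ c0Rel 𝒳,
      ∃ F G A : lp (fun _ : X => ℂ) 2 →L[ℂ] lp (fun _ : X => ℂ) 2,
        IsMulOp f F ∧ IsMulOp g G ∧ T = F.comp (A.comp G)}

lemma KRel_eq (𝒳 : Set (Set X)) :
    KRel 𝒳 = closure (AddSubmonoid.closure (genSet 𝒳) :
      Set (lp (fun _ : X => ℂ) 2 →L[ℂ] lp (fun _ : X => ℂ) 2)) := rfl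

lemma genSet_subset_KRel (𝒳 : Set (Set X)) : genSet 𝒳 ⊆ KRel 𝒳 :=
  fun _ h => subset_closure (AddSubmonoid.subset_closure h)

lemma KRel_add {𝒳 : Set (Set X)} {x y} (hx : x ∈ KRel 𝒳) (hy : y ∈ KRel 𝒳) :
    x + y ∈ KRel 𝒳 :=
  (AddSubmonoid.closure (genSet 𝒳)).topologicalClosure.add_mem hx hy

lemma KRel_isClosed (𝒳 : Set (Set X)) : IsClosed (KRel 𝒳) := isClosed_closure

lemma mapsTo_KRel {𝒳 : Set (Set X)}
    (L : (lp (fun _ : X => ℂ) 2 →L[ℂ] lp (fun _ : X => ℂ) 2) →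
         (lp (fun _ : X => ℂ) 2 →L[ℂ] lp (fun _ : X => ℂ) 2))
    (hLc : Continuous L) (hL0 : L 0 = 0)
    (hLadd : ∀ x y, L (x + y) = L x + L y)
    (h : ∀ T ∈ genSet 𝒳, L T ∈ KRel 𝒳) {c} (hc : c ∈ KRel 𝒳) : L c ∈ KRel 𝒳 := by
  have hcl : IsClosed (L ⁻¹' (KRel 𝒳)) := (KRel_isClosed 𝒳).preimage hLc
  have hsub : (AddSubmonoid.closure (genSet 𝒳) :
      Set (lp (fun _ : X => ℂ) 2 →L[ℂ] lp (fun _ : X => ℂ) 2)) ⊆ L ⁻¹' (KRel 𝒳) := by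
    intro T hT
    refine AddSubmonoid.closure_induction h ?_ ?_ hT
    · simp only [Set.mem_preimage, hL0]
      exact subset_closure (AddSubmonoid.zero_mem _)
    · intro x y _ _ hx hy
      simp only [Set.mem_preimage, hLadd]
      exact KRel_add hx hy
  exact (hcl.closure_subset_iff.mpr hsub) hc

lemma KRel_neg {𝒳 : Set (Set X)} {c} (hc : c ∈ KRel 𝒳) : -c ∈ KRel 𝒳 := by
  refine mapsTo_KRel (𝒳 := 𝒳) (fun x => -x) continuous_neg neg_zero
    (fun x y => neg_add x y) ?_ hc
  rintro T ⟨f, hf, g, hg, F, G, A, hF, hG, rfl⟩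
  apply genSet_subset_KRel
  refine ⟨f, hf, g, hg, F, G, -A, hF, hG, ?_⟩
  ext ξ; simp

lemma KRel_sub {𝒳 : Set (Set X)} {x y} (hx : x ∈ KRel 𝒳) (hy : y ∈ KRel 𝒳) :
    x - y ∈ KRel 𝒳 := by
  rw [sub_eq_add_neg]; exact KRel_add hx (KRel_neg hy)

lemma ind_mem_c0alg {𝒳 : Set (Set X)} {E : Set X} (hE : E ∈ 𝒳) : ind E ∈ c0alg 𝒳 := by
  refine ⟨E, hE, fun x hx => ?_⟩
  by_contra h
  exact hx (by simp [ind_apply, h])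

lemma mem_genSet_of_small {𝒳 : Set (Set X)} {f : lp (fun _ : X => ℂ) ∞}
    {F : lp (fun _ : X => ℂ) 2 →L[ℂ] lp (fun _ : X => ℂ) 2}
    (hf : f ∈ c0alg 𝒳) (hF : IsMulOp f F) : F ∈ genSet 𝒳 := by
  obtain ⟨E, hE, hsub⟩ := hf
  refine ⟨ind E, subset_closure (ind_mem_c0alg hE), f, subset_closure ⟨E, hE, hsub⟩,
    mulOp (ind E), F, ContinuousLinearMap.id ℂ _, isMulOp_mulOp _, hF, ?_⟩
  ext ξ x
  have : ((mulOp (ind E)).comp ((ContinuousLinearMap.id ℂ _).comp F)) ξ x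
      = ind E x * (F ξ x) := rfl
  rw [this, hF ξ x, ind_apply]
  by_cases hx : x ∈ E
  · rw [Set.indicator_of_mem hx]; ring
  · have hfx : f x = 0 := by
      by_contra h
      exact hx (hsub h)
    rw [Set.indicator_of_notMem hx, hfx]; ring

lemma mulOp_mem_KRel {𝒳 : Set (Set X)} {f : lp (fun _ : X => ℂ) ∞}
    {F : lp (fun _ : X => ℂ) 2 →L[ℂ] lp (fun _ : X => ℂ) 2}
    (hf : f ∈ c0Rel 𝒳) (hF : IsMulOp f F) : F ∈ KRel 𝒳 := by
  rw [KRel_eq, Metric.mem_closure_iff]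
  intro ε hε
  rw [c0Rel, Metric.mem_closure_iff] at hf
  obtain ⟨g, hg, hdist⟩ := hf ε hε
  refine ⟨mulOp g, AddSubmonoid.subset_closure
    (mem_genSet_of_small hg (isMulOp_mulOp g)), ?_⟩
  rw [dist_eq_norm]
  calc ‖F - mulOp g‖ ≤ ‖f - g‖ := isMulOp_norm_le (isMulOp_sub hF (isMulOp_mulOp g))
    _ < ε := by rwa [dist_eq_norm] at hdist

end KRelAux

open KRelAux ContinuousLinearMap in
/-- A bounded operator `a` on `ℓ²(X)` is a multiplier of `K(𝒳)` iff it commutes with all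
multiplication operators `M_f`, `f ∈ c0(𝒳)`, modulo `K(𝒳)`. -/
theorem mem_multiplier_iff_commutator {X : Type*} (𝒳 : Set (Set X))
    (hU : ∀ E ∈ 𝒳, ∀ F ∈ 𝒳, E ∪ F ∈ 𝒳)
    (a : lp (fun _ : X => ℂ) 2 →L[ℂ] lp (fun _ : X => ℂ) 2) :
    (∀ k ∈ KRel 𝒳, a.comp k ∈ KRel 𝒳 ∧ k.comp a ∈ KRel 𝒳) ↔
    (∀ f ∈ c0Rel 𝒳, ∀ F : lp (fun _ : X => ℂ) 2 →L[ℂ] lp (fun _ : X => ℂ) 2,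
      IsMulOp f F → a.comp F - F.comp a ∈ KRel 𝒳) := by
  constructor
  · intro h1 f hf F hF
    obtain ⟨h1a, h1b⟩ := h1 F (mulOp_mem_KRel hf hF)
    exact KRel_sub h1a h1b
  · intro h2 k hk
    constructor
    · refine mapsTo_KRel (𝒳 := 𝒳) (fun c => a.comp c)
        (continuous_const.clm_comp continuous_id) (comp_zero a)
        (fun x y => comp_add a x y) ?_ hk
      rintro T ⟨f, hf, g, hg, F, G, A, hF, hG, rfl⟩
      have hc := h2 f hf F hF
      have key : a.comp (F.comp (A.comp G))
          = (a.comp F - F.comp a).comp (A.comp G) + F.comp ((a.comp A).comp G) := by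
        simp only [ContinuousLinearMap.sub_comp, ContinuousLinearMap.comp_assoc]
        abel
      show a.comp (F.comp (A.comp G)) ∈ KRel 𝒳
      rw [key]
      apply KRel_add
      · refine mapsTo_KRel (𝒳 := 𝒳) (fun c => c.comp (A.comp G))
          (continuous_id.clm_comp continuous_const) (zero_comp (A.comp G))
          (fun x y => add_comp x y (A.comp G)) ?_ hc
        rintro T' ⟨f', hf', g', hg', F', G', A', hF', hG', rfl⟩
        apply genSet_subset_KRel
        refine ⟨f', hf', g, hg, F', G, A'.comp (G'.comp A), hF', hG, ?_⟩
        simp only [ContinuousLinearMap.comp_assoc]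
      · exact genSet_subset_KRel 𝒳 ⟨f, hf, g, hg, F, G, a.comp A, hF, hG, rfl⟩
    · refine mapsTo_KRel (𝒳 := 𝒳) (fun c => c.comp a)
        (continuous_id.clm_comp continuous_const) (zero_comp a)
        (fun x y => add_comp x y a) ?_ hk
      rintro T ⟨f, hf, g, hg, F, G, A, hF, hG, rfl⟩
      have hc := h2 g hg G hG
      have key : (F.comp (A.comp G)).comp a
          = F.comp ((A.comp a).comp G) - (F.comp A).comp (a.comp G - G.comp a) := by
        simp only [ContinuousLinearMap.comp_sub, ContinuousLinearMap.sub_comp,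
          ContinuousLinearMap.comp_assoc]
        abel
      show (F.comp (A.comp G)).comp a ∈ KRel 𝒳
      rw [key]
      apply KRel_sub
      · exact genSet_subset_KRel 𝒳 ⟨f, hf, g, hg, F, G, A.comp a, hF, hG, rfl⟩
      · refine mapsTo_KRel (𝒳 := 𝒳) (fun c => (F.comp A).comp c)
          (continuous_const.clm_comp continuous_id) (comp_zero (F.comp A))
          (fun x y => comp_add (F.comp A) x y) ?_ hc
        rintro T' ⟨f', hf', g', hg', F', G', A', hF', hG', rfl⟩
        apply genSet_subset_KRel
        refine ⟨f, hf, g', hg', F, G', (A.comp F').comp A', hF, hG', ?_⟩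
        simp only [ContinuousLinearMap.comp_assoc]
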